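/- Let W be a group and let D be a central subgroup of W which is infinite cyclic and of finite index in W. Then the composite homomorphism D → W → W/[W,W] from D to the abelianization of W is injective, and its image has finite index in W/[W,W]. In particular, the quotient of the abelianization W/[W,W] by its torsion subgroup is an infinite cyclic group. -/

import Mathlib

/-- If `g` has infinite order, any element of `⟨g⟩` of finite order is trivial. -/
private lemma zpow_of_finOrder_eq_one {G : Type*} [Group G] {g : G}
    (hg : ¬ IsOfFinOrder g) {k : ℤ} (h : IsOfFinOrder (g ^ k)) : g ^ k = 1 := by
  have hnat : IsOfFinOrder (g ^ k.natAbs) := by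
    rw [← zpow_natCast]
    rcases Int.natAbs_eq k with hk | hk
    · rw [← hk]; exact h
    · rw [show ((k.natAbs : ℤ)) = -k by omega, zpow_neg]; exact h.inv
  rcases Nat.eq_zero_or_pos k.natAbs with h0 | hpos
  · rw [Int.natAbs_eq_zero.mp h0, zpow_zero]
  · exact absurd (hnat.of_pow hpos.ne') hg

private lemma isCyclic_zpowers {G : Type*} [Group G] (a : G) :
    IsCyclic (Subgroup.zpowers a) := by
  refine ⟨⟨⟨a, Subgroup.mem_zpowers a⟩, ?_⟩⟩
  rintro ⟨x, hx⟩
  obtain ⟨k, rfl⟩ := Subgroup.mem_zpowers_iff.mp hx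
  exact ⟨k, by ext; simp⟩

/-- If `D` is a central infinite cyclic subgroup of finite index in a group `W`, then the
composite `D → W → W/[W,W]` is injective with image of finite index; in particular the
quotient of the abelianization of `W` by its torsion subgroup is infinite cyclic. -/
theorem abelianization_mod_torsion_infinite_cyclic
    {W : Type*} [Group W] (D : Subgroup W)
    (hcentral : D ≤ Subgroup.center W)
    (hcyc : (∃ g : W, D = Subgroup.zpowers g) ∧ (D : Set W).Infinite)
    (hfi : D.FiniteIndex) :
    Function.Injective ((Abelianization.of (G := W)).comp D.subtype) ∧
    (D.map (Abelianization.of (G := W))).FiniteIndex ∧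
    (IsCyclic (Abelianization W ⧸ CommGroup.torsion (Abelianization W)) ∧
     Infinite (Abelianization W ⧸ CommGroup.torsion (Abelianization W))) := by
  classical
  obtain ⟨⟨g, rfl⟩, hinf⟩ := hcyc
  have hg : ¬ IsOfFinOrder g := infinite_zpowers.mp hinf
  haveI hZfi : (Subgroup.center W).FiniteIndex := Subgroup.finiteIndex_of_le hcentral
  set n := (Subgroup.center W).index with hn
  have hn0 : n ≠ 0 := hZfi.index_ne_zero
  -- the transfer map, factored through the abelianization
  open scoped IsMulCommutative in
  let t : Abelianization W →* Subgroup.center W :=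
    Abelianization.lift (MonoidHom.transferCenterPow W)
  have ht : ∀ x : W, (t (Abelianization.of x) : W) = x ^ n := fun x => by
    simp only [t, Abelianization.lift_apply_of]
    exact MonoidHom.transferCenterPow_apply x
  -- key: anything in `D` killed by `Abelianization.of` is trivial
  have hker : ∀ x : W, x ∈ Subgroup.zpowers g → Abelianization.of x = 1 → x = 1 := by
    intro x hx h1
    have hxn : x ^ n = 1 := by
      have := ht x
      rw [h1, map_one] at this
      simpa using this.symm
    obtain ⟨k, rfl⟩ := Subgroup.mem_zpowers_iff.mp hx
    exact zpow_of_finOrder_eq_one hg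
      (isOfFinOrder_iff_pow_eq_one.mpr ⟨n, Nat.pos_of_ne_zero hn0, hxn⟩)
  have hinj : Function.Injective
      ((Abelianization.of (G := W)).comp (Subgroup.zpowers g).subtype) := by
    rw [injective_iff_map_eq_one]
    rintro ⟨x, hx⟩ h
    exact Subtype.ext (hker x hx h)
  refine ⟨hinj, ?_, ?_⟩
  · -- finite index of the image
    have hsurj : Function.Surjective (Abelianization.of (G := W)) := fun y =>
      Quotient.inductionOn' y fun a => ⟨a, rfl⟩
    have hdvd := (Subgroup.zpowers g).index_map_dvd hsurj
    exact ⟨fun h => hfi.index_ne_zero (by rw [h] at hdvd; exact zero_dvd_iff.mp hdvd)⟩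
  -- the quotient by torsion
  have hsurj : Function.Surjective (Abelianization.of (G := W)) := fun y =>
    Quotient.inductionOn' y fun a => ⟨a, rfl⟩
  set og : Abelianization W := Abelianization.of g with hog
  have hogfin : ¬ IsOfFinOrder og := by
    intro h
    obtain ⟨m, hm, h1⟩ := isOfFinOrder_iff_pow_eq_one.mp h
    have : Abelianization.of (g ^ m) = 1 := by rw [map_pow]; exact h1
    have hgm : g ^ m = 1 :=
      hker (g ^ m) (by exact ⟨(m : ℤ), by simp⟩) this
    exact hg (isOfFinOrder_iff_pow_eq_one.mpr ⟨m, hm, hgm⟩)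
  set S : Subgroup (Abelianization W) :=
    (Subgroup.zpowers g).map (Abelianization.of (G := W)) with hS
  have hSz : S = Subgroup.zpowers og := by
    rw [hS, MonoidHom.map_zpowers]
  haveI hSfi : S.FiniteIndex := by
    have hdvd := (Subgroup.zpowers g).index_map_dvd hsurj
    exact ⟨fun h => hfi.index_ne_zero (by rw [← hS, h] at hdvd; exact zero_dvd_iff.mp hdvd)⟩
  set m := S.index with hm
  have hm0 : m ≠ 0 := hSfi.index_ne_zero
  -- every element of S of finite order is trivial
  have hSfree : ∀ y ∈ S, IsOfFinOrder y → y = 1 := by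
    intro y hy hfin
    rw [hSz] at hy
    obtain ⟨k, rfl⟩ := Subgroup.mem_zpowers_iff.mp hy
    exact zpow_of_finOrder_eq_one hogfin hfin
  -- the homomorphism x ↦ x ^ m into S
  let φ : Abelianization W →* S :=
    MonoidHom.mk' (fun x => ⟨x ^ m, S.pow_index_mem x⟩)
      (fun a b => by ext; simp [mul_pow])
  have hTker : CommGroup.torsion (Abelianization W) ≤ φ.ker := by
    intro x hx
    have hxt : IsOfFinOrder x := (CommGroup.mem_torsion x).mp hx
    have : x ^ m = 1 := hSfree _ (S.pow_index_mem x) (hxt.pow)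
    exact MonoidHom.mem_ker.mpr (Subtype.ext this)
  let φ' : (Abelianization W ⧸ CommGroup.torsion (Abelianization W)) →* S :=
    QuotientGroup.lift _ φ hTker
  have hφ'inj : Function.Injective φ' := by
    rw [injective_iff_map_eq_one]
    intro q hq
    induction q using QuotientGroup.induction_on with
    | H x =>
      have hx : φ x = 1 := hq
      have hxm : x ^ m = 1 := congrArg Subtype.val hx
      exact (QuotientGroup.eq_one_iff x).mpr
        ((CommGroup.mem_torsion x).mpr
          (isOfFinOrder_iff_pow_eq_one.mpr ⟨m, Nat.pos_of_ne_zero hm0, hxm⟩))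
  constructor
  · -- cyclic
    haveI : IsCyclic S := by rw [hSz]; exact isCyclic_zpowers og
    haveI : IsCyclic φ'.range := Subgroup.isCyclic φ'.range
    exact isCyclic_of_surjective (MonoidHom.ofInjective hφ'inj).symm.toMonoidHom
      (MonoidHom.ofInjective hφ'inj).symm.surjective
  · -- infinite
    have hne : ¬ IsOfFinOrder
        ((QuotientGroup.mk og : Abelianization W ⧸ CommGroup.torsion (Abelianization W))) := by
      intro h
      obtain ⟨j, hj, h1⟩ := isOfFinOrder_iff_pow_eq_one.mp h
      have : (og ^ j) ∈ CommGroup.torsion (Abelianization W) := by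
        rw [← QuotientGroup.eq_one_iff]
        rw [← h1]
        rfl
      have : IsOfFinOrder (og ^ j) := (CommGroup.mem_torsion _).mp this
      exact hogfin (this.of_pow hj.ne')
    exact Infinite.of_injective (fun k : ℤ => (QuotientGroup.mk og) ^ k)
      (injective_zpow_iff_not_isOfFinOrder.mpr hne)
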